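/- If a smooth embedded hypersurface Σ ⊂ ℝ^{m+1} with unit normal field ν satisfies the uniform ball condition of radius 𝖺 (for every p ∈ Σ the open balls B(p ± 𝖺 ν(p), 𝖺) do not meet Σ), then the map X : Σ × (−𝖺,𝖺) → ℝ^{m+1}, X(p,r) = p + r ν(p), is injective. -/

import Mathlib

private lemma stmt2_aux (a n c1 c2 r s : ℝ) (ha : 0 < a) (hnn : 0 ≤ n)
    (habs1 : 2 * a * |c1| ≤ n ^ 2) (habs2 : 2 * a * |c2| ≤ n ^ 2)
    (hra : |r| < a) (hsa : |s| < a)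
    (h5 : n ^ 2 ≤ |r| * |c1| + |s| * |c2|) : n = 0 := by
  by_contra hne
  have hpos : 0 < n := lt_of_le_of_ne hnn (Ne.symm hne)
  have hn2 : 0 < n ^ 2 := by positivity
  nlinarith [mul_le_mul_of_nonneg_left habs1 (abs_nonneg r),
    mul_le_mul_of_nonneg_left habs2 (abs_nonneg s),
    mul_pos (sub_pos.mpr hra) hn2, mul_pos (sub_pos.mpr hsa) hn2,
    abs_nonneg c1, abs_nonneg c2]

/-- If a hypersurface `S ⊂ ℝ^{m+1}` with unit normal field `ν` satisfies the uniform ball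
condition of radius `a` (for every `p ∈ S` the open balls `B(p ± a ν(p), a)` do not meet `S`),
then the map `X : S × (−a,a) → ℝ^{m+1}`, `X(p,r) = p + r ν(p)`, is injective. -/
theorem stmt2 (m : ℕ) (a : ℝ) (ha : 0 < a)
    (S : Set (EuclideanSpace ℝ (Fin (m + 1))))
    (ν : EuclideanSpace ℝ (Fin (m + 1)) → EuclideanSpace ℝ (Fin (m + 1)))
    (hν : ∀ p ∈ S, ‖ν p‖ = 1)
    (hball : ∀ p ∈ S, Metric.ball (p + a • ν p) a ∩ S = ∅ ∧
      Metric.ball (p - a • ν p) a ∩ S = ∅) :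
    ∀ p ∈ S, ∀ q ∈ S, ∀ r ∈ Set.Ioo (-a) a, ∀ s ∈ Set.Ioo (-a) a,
      p + r • ν p = q + s • ν q → p = q ∧ r = s := by
  intro p hp q hq r hr s hs heq
  have hνp := hν p hp
  have hνq := hν q hq
  set c1 : ℝ := inner ℝ (q - p) (ν p) with hc1
  set c2 : ℝ := inner ℝ (q - p) (ν q) with hc2
  set n : ℝ := ‖q - p‖ with hn
  have hnn : 0 ≤ n := norm_nonneg _
  -- distance lower bounds from the ball condition
  have hdist : ∀ x y : EuclideanSpace ℝ (Fin (m + 1)), x ∈ S →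
      Metric.ball y a ∩ S = ∅ → a ≤ ‖x - y‖ := by
    intro x y hx hb
    by_contra h
    push_neg at h
    have : x ∈ Metric.ball y a ∩ S := ⟨Metric.mem_ball.mpr (by rwa [dist_eq_norm]), hx⟩
    rw [hb] at this
    exact this
  have hd1 := hdist q (p + a • ν p) hq (hball p hp).1
  have hd2 := hdist q (p - a • ν p) hq (hball p hp).2
  have hd3 := hdist p (q + a • ν q) hp (hball q hq).1
  have hd4 := hdist p (q - a • ν q) hp (hball q hq).2
  have hna : ‖a • ν p‖ = a := by rw [norm_smul, hνp, Real.norm_eq_abs, abs_of_pos ha, mul_one]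
  have hnb : ‖a • ν q‖ = a := by rw [norm_smul, hνq, Real.norm_eq_abs, abs_of_pos ha, mul_one]
  -- k1 : 2*a*c1 ≤ n^2
  have k1 : 2 * a * c1 ≤ n ^ 2 := by
    have e : q - (p + a • ν p) = (q - p) - a • ν p := by abel
    rw [e] at hd1
    have h2 : a ^ 2 ≤ ‖(q - p) - a • ν p‖ ^ 2 := by
      have := pow_le_pow_left₀ ha.le hd1 2
      simpa using this
    rw [norm_sub_sq_real, real_inner_smul_right, hna] at h2
    rw [← hc1, ← hn] at h2
    nlinarith
  have k2 : -(2 * a * c1) ≤ n ^ 2 := by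
    have e : q - (p - a • ν p) = (q - p) + a • ν p := by abel
    rw [e] at hd2
    have h2 : a ^ 2 ≤ ‖(q - p) + a • ν p‖ ^ 2 := by
      have := pow_le_pow_left₀ ha.le hd2 2
      simpa using this
    rw [norm_add_sq_real, real_inner_smul_right, hna] at h2
    rw [← hc1, ← hn] at h2
    nlinarith
  have k3 : -(2 * a * c2) ≤ n ^ 2 := by
    have e : p - (q + a • ν q) = -((q - p) + a • ν q) := by abel
    rw [e, norm_neg] at hd3
    have h2 : a ^ 2 ≤ ‖(q - p) + a • ν q‖ ^ 2 := by
      have := pow_le_pow_left₀ ha.le hd3 2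
      simpa using this
    rw [norm_add_sq_real, real_inner_smul_right, hnb] at h2
    rw [← hc2, ← hn] at h2
    nlinarith
  have k4 : 2 * a * c2 ≤ n ^ 2 := by
    have e : p - (q - a • ν q) = -((q - p) - a • ν q) := by abel
    rw [e, norm_neg] at hd4
    have h2 : a ^ 2 ≤ ‖(q - p) - a • ν q‖ ^ 2 := by
      have := pow_le_pow_left₀ ha.le hd4 2
      simpa using this
    rw [norm_sub_sq_real, real_inner_smul_right, hnb] at h2
    rw [← hc2, ← hn] at h2
    nlinarith
  -- v = r ν p - s ν q
  have hv : q - p = r • ν p - s • ν q := by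
    have h : q - p - (r • ν p - s • ν q) = (q + s • ν q) - (p + r • ν p) := by abel
    rw [← heq, sub_self] at h
    exact sub_eq_zero.mp h
  have e0 : n ^ 2 = r * c1 - s * c2 := by
    rw [hn, ← real_inner_self_eq_norm_sq, hc1, hc2]
    nth_rw 2 [hv]
    rw [inner_sub_right, real_inner_smul_right, real_inner_smul_right]
  -- abs bounds
  have habs1 : 2 * a * |c1| ≤ n ^ 2 := by
    rcases abs_cases c1 with ⟨h, _⟩ | ⟨h, _⟩ <;> rw [h] <;> linarith
  have habs2 : 2 * a * |c2| ≤ n ^ 2 := by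
    rcases abs_cases c2 with ⟨h, _⟩ | ⟨h, _⟩ <;> rw [h] <;> linarith
  have hra : |r| < a := abs_lt.mpr ⟨hr.1, hr.2⟩
  have hsa : |s| < a := abs_lt.mpr ⟨hs.1, hs.2⟩
  have h5 : n ^ 2 ≤ |r| * |c1| + |s| * |c2| := by
    calc n ^ 2 = r * c1 - s * c2 := e0
    _ ≤ |r * c1 - s * c2| := le_abs_self _
    _ ≤ |r * c1| + |s * c2| := abs_sub _ _
    _ = |r| * |c1| + |s| * |c2| := by rw [abs_mul, abs_mul]
  -- conclude n = 0
  have hn0 : n = 0 := stmt2_aux a n c1 c2 r s ha hnn habs1 habs2 hra hsa h5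
  have hpq : p = q := by
    have : q - p = 0 := by rwa [hn, norm_eq_zero] at hn0
    have := sub_eq_zero.mp this
    exact this.symm
  refine ⟨hpq, ?_⟩
  subst hpq
  have h2 : (r - s) • ν p = 0 := by
    have h : r • ν p - s • ν p = (p + r • ν p) - (p + s • ν p) := by abel
    rw [heq, sub_self] at h
    rw [sub_smul, h]
  rcases smul_eq_zero.mp h2 with h | h
  · linarith [sub_eq_zero.mp (by exact_mod_cast h)]
  · exfalso; rw [h] at hνp; simp at hνp
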